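/- For every nonnegative integer n, ∑_{k=0}^n binomial(n,k)·(-1)^k·(binomial(2k,k)/4^k)·D_k = (binomial(2n,n)/4^n)·D_n, where D_k is the sequence of rational numbers defined below. -/

import Mathlib

/-- `D_n = (∑_{i=1}^n 1/(2i-1))² - ∑_{i=1}^n 1/(2i-1)²` (so `D_0 = 0`). -/
def D (n : ℕ) : ℚ :=
  (∑ i ∈ Finset.Icc 1 n, (1 : ℚ) / (2 * i - 1)) ^ 2
    - ∑ i ∈ Finset.Icc 1 n, (1 : ℚ) / (2 * i - 1) ^ 2

open Finset Polynomial

/-- The odd harmonic numbers `∑_{i=1}^n 1/(2i-1)`. -/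
def Sh (n : ℕ) : ℚ := ∑ i ∈ Finset.Icc 1 n, (1 : ℚ) / (2 * i - 1)

lemma sum1_succ (n : ℕ) :
    (∑ i ∈ Finset.Icc 1 (n + 1), (1 : ℚ) / (2 * i - 1))
      = (∑ i ∈ Finset.Icc 1 n, (1 : ℚ) / (2 * i - 1)) + 1 / (2 * (n : ℚ) + 1) := by
  rw [Finset.sum_Icc_succ_top (by omega : 1 ≤ n + 1), Nat.cast_add_one,
    show 2 * ((n : ℚ) + 1) - 1 = 2 * (n : ℚ) + 1 from by ring]

lemma sum2_succ (n : ℕ) :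
    (∑ i ∈ Finset.Icc 1 (n + 1), (1 : ℚ) / (2 * i - 1) ^ 2)
      = (∑ i ∈ Finset.Icc 1 n, (1 : ℚ) / (2 * i - 1) ^ 2) + (1 / (2 * (n : ℚ) + 1)) ^ 2 := by
  rw [Finset.sum_Icc_succ_top (by omega : 1 ≤ n + 1), Nat.cast_add_one,
    show 2 * ((n : ℚ) + 1) - 1 = 2 * (n : ℚ) + 1 from by ring, div_pow, one_pow]

lemma Sh_succ (n : ℕ) : Sh (n + 1) = Sh n + 1 / (2 * (n : ℚ) + 1) := by
  unfold Sh; exact sum1_succ n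

lemma D_succ (n : ℕ) : D (n + 1) = D n + 2 * Sh n / (2 * (n : ℚ) + 1) := by
  unfold D Sh
  rw [sum1_succ n, sum2_succ n]
  ring

/-- `e k = (-1)^k * C(2k,k) * k! / 4^k`, i.e. `(-1/2)(-3/2)⋯(-(2k-1)/2)`. -/
def e (k : ℕ) : ℚ := (-1) ^ k * ((2 * k).choose k : ℚ) * k.factorial / 4 ^ k

/-- `g n = C(2n,n) * n! / 4^n`, i.e. `(1/2)(3/2)⋯((2n-1)/2)`. -/
def g (n : ℕ) : ℚ := ((2 * n).choose n : ℚ) * n.factorial / 4 ^ n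

lemma centralBinom_succ (k : ℕ) :
    (((2 * (k + 1)).choose (k + 1) : ℕ) : ℚ) * ((k : ℚ) + 1)
      = 2 * (2 * (k : ℚ) + 1) * (((2 * k).choose k : ℕ) : ℚ) := by
  have h := Nat.succ_mul_centralBinom_succ k
  unfold Nat.centralBinom at h
  have h' : (((k + 1) * ((2 * (k + 1)).choose (k + 1)) : ℕ) : ℚ)
      = ((2 * (2 * k + 1) * ((2 * k).choose k) : ℕ) : ℚ) := by exact_mod_cast h
  push_cast at h'
  linarith [h']

lemma e_succ (k : ℕ) : e (k + 1) = e k * (-1 / 2 - (k : ℚ)) := by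
  have hk1 : ((k : ℚ) + 1) ≠ 0 := by positivity
  have hC : (((2 * (k + 1)).choose (k + 1) : ℕ) : ℚ)
      = 2 * (2 * (k : ℚ) + 1) * (((2 * k).choose k : ℕ) : ℚ) / ((k : ℚ) + 1) := by
    rw [eq_div_iff hk1]
    exact centralBinom_succ k
  unfold e
  rw [hC, Nat.factorial_succ, pow_succ, pow_succ]
  have h4 : (4 : ℚ) ^ k ≠ 0 := by positivity
  push_cast
  field_simp
  ring

lemma g_succ (n : ℕ) : g (n + 1) = g n * ((n : ℚ) + 1 / 2) := by
  have hk1 : ((n : ℚ) + 1) ≠ 0 := by positivity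
  have hC : (((2 * (n + 1)).choose (n + 1) : ℕ) : ℚ)
      = 2 * (2 * (n : ℚ) + 1) * (((2 * n).choose n : ℕ) : ℚ) / ((n : ℚ) + 1) := by
    rw [eq_div_iff hk1]
    exact centralBinom_succ n
  unfold g
  rw [hC, Nat.factorial_succ, pow_succ]
  have h4 : (4 : ℚ) ^ n ≠ 0 := by positivity
  push_cast
  field_simp
  ring

/-- The ring `ℚ[ε]/(ε³)`: triples `(a, b, c)` representing `a + bε + cε²`. -/
@[ext] structure T3 : Type where
  a : ℚ
  b : ℚ
  c : ℚ

namespace T3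

instance : Zero T3 := ⟨⟨0, 0, 0⟩⟩
instance : One T3 := ⟨⟨1, 0, 0⟩⟩
instance : Add T3 := ⟨fun x y => ⟨x.a + y.a, x.b + y.b, x.c + y.c⟩⟩
instance : Neg T3 := ⟨fun x => ⟨-x.a, -x.b, -x.c⟩⟩
instance : Mul T3 :=
  ⟨fun x y => ⟨x.a * y.a, x.a * y.b + x.b * y.a, x.a * y.c + x.b * y.b + x.c * y.a⟩⟩

@[simp] lemma zero_a : (0 : T3).a = 0 := rfl
@[simp] lemma zero_b : (0 : T3).b = 0 := rfl
@[simp] lemma zero_c : (0 : T3).c = 0 := rfl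
@[simp] lemma one_a : (1 : T3).a = 1 := rfl
@[simp] lemma one_b : (1 : T3).b = 0 := rfl
@[simp] lemma one_c : (1 : T3).c = 0 := rfl
@[simp] lemma add_a (x y : T3) : (x + y).a = x.a + y.a := rfl
@[simp] lemma add_b (x y : T3) : (x + y).b = x.b + y.b := rfl
@[simp] lemma add_c (x y : T3) : (x + y).c = x.c + y.c := rfl
@[simp] lemma neg_a (x : T3) : (-x).a = -x.a := rfl
@[simp] lemma neg_b (x : T3) : (-x).b = -x.b := rfl
@[simp] lemma neg_c (x : T3) : (-x).c = -x.c := rfl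
@[simp] lemma mul_a (x y : T3) : (x * y).a = x.a * y.a := rfl
@[simp] lemma mul_b (x y : T3) : (x * y).b = x.a * y.b + x.b * y.a := rfl
@[simp] lemma mul_c (x y : T3) : (x * y).c = x.a * y.c + x.b * y.b + x.c * y.a := rfl

instance : CommRing T3 where
  add_assoc x y z := by ext <;> simp <;> ring
  zero_add x := by ext <;> simp
  add_zero x := by ext <;> simp
  add_comm x y := by ext <;> simp <;> ring
  neg_add_cancel x := by ext <;> simp
  mul_assoc x y z := by ext <;> simp <;> ring
  one_mul x := by ext <;> simp
  mul_one x := by ext <;> simp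
  left_distrib x y z := by ext <;> simp <;> ring
  right_distrib x y z := by ext <;> simp <;> ring
  mul_comm x y := by ext <;> simp <;> ring
  zero_mul x := by ext <;> simp
  mul_zero x := by ext <;> simp
  nsmul := nsmulRec
  zsmul := zsmulRec

@[simp] lemma natCast_a (n : ℕ) : ((n : T3)).a = n := by
  induction n with
  | zero => simp [Nat.cast_zero]
  | succ k ih => rw [Nat.cast_succ]; push_cast; simp [ih]

@[simp] lemma natCast_b (n : ℕ) : ((n : T3)).b = 0 := by
  induction n with
  | zero => simp [Nat.cast_zero]
  | succ k ih => rw [Nat.cast_succ]; simp [ih]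

@[simp] lemma natCast_c (n : ℕ) : ((n : T3)).c = 0 := by
  induction n with
  | zero => simp [Nat.cast_zero]
  | succ k ih => rw [Nat.cast_succ]; simp [ih]

@[simp] lemma sub_a (x y : T3) : (x - y).a = x.a - y.a := by
  rw [sub_eq_add_neg, sub_eq_add_neg]; rw [add_a, neg_a]

@[simp] lemma sub_b (x y : T3) : (x - y).b = x.b - y.b := by
  rw [sub_eq_add_neg, sub_eq_add_neg]; rw [add_b, neg_b]

@[simp] lemma sub_c (x y : T3) : (x - y).c = x.c - y.c := by
  rw [sub_eq_add_neg, sub_eq_add_neg]; rw [add_c, neg_c]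

/-- Extracting the `ε²`-coefficient is additive. -/
def cHom : T3 →+ ℚ where
  toFun := T3.c
  map_zero' := rfl
  map_add' _ _ := rfl

end T3

noncomputable section

/-- `-1/2 + ε` in `T3`. -/
def x0 : T3 := ⟨-1/2, 1, 0⟩

lemma dP_smeval (x : T3) : ∀ k : ℕ,
    (descPochhammer ℤ k).smeval x = ∏ i ∈ Finset.range k, (x - (i : T3))
  | 0 => by simp [descPochhammer_zero, Polynomial.smeval_one]
  | (k + 1) => by
    rw [descPochhammer_succ_right, Polynomial.smeval_mul, dP_smeval x k,
      Finset.prod_range_succ, Polynomial.smeval_sub, Polynomial.smeval_X,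
      Polynomial.smeval_natCast]
    simp [pow_zero, pow_one, nsmul_eq_mul]

lemma Icc10 : Finset.Icc 1 0 = (∅ : Finset ℕ) := Finset.Icc_eq_empty_of_lt (by omega)

lemma Sh0 : Sh 0 = 0 := by unfold Sh; rw [Icc10]; simp

lemma D0 : D 0 = 0 := by unfold D; rw [Icc10]; simp

lemma e0 : e 0 = 1 := by unfold e; norm_num

lemma g0 : g 0 = 1 := by unfold g; norm_num

lemma key1 : ∀ k : ℕ,
    (∏ i ∈ Finset.range k, (x0 - (i : T3))) = ⟨e k, -2 * e k * Sh k, 2 * e k * D k⟩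
  | 0 => by
    rw [Finset.prod_range_zero, Sh0, D0, e0]
    ext <;> simp
  | (k + 1) => by
    rw [Finset.prod_range_succ, key1 k]
    have hx : x0 - ((k : ℕ) : T3) = ⟨-1/2 - (k : ℚ), 1, 0⟩ := by
      ext <;> simp [x0]
    rw [hx]
    have hne : (2 * (k : ℚ) + 1) ≠ 0 := by positivity
    ext
    · simp only [T3.mul_a, e_succ k]
      try ring
    · simp only [T3.mul_b, e_succ k, Sh_succ k]
      field_simp
      ring
    · simp only [T3.mul_c, e_succ k, Sh_succ k, D_succ k]
      field_simp
      ring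

lemma key2 : ∀ n : ℕ,
    (∏ i ∈ Finset.range n, ((⟨(i : ℚ) + 1/2, 1, 0⟩ : T3)))
      = ⟨g n, 2 * g n * Sh n, 2 * g n * D n⟩
  | 0 => by
    rw [Finset.prod_range_zero, Sh0, D0, g0]
    ext <;> simp
  | (n + 1) => by
    rw [Finset.prod_range_succ, key2 n]
    have hne : (2 * (n : ℚ) + 1) ≠ 0 := by positivity
    ext
    · simp only [T3.mul_a, g_succ n]
      try ring
    · simp only [T3.mul_b, g_succ n, Sh_succ n]
      field_simp
      ring
    · simp only [T3.mul_c, g_succ n, Sh_succ n, D_succ n]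
      field_simp
      ring

lemma keyN (n : ℕ) : ∀ j : ℕ,
    (∏ i ∈ Finset.range j, ((n : T3) - (i : T3))) = ((n.descFactorial j : ℕ) : T3)
  | 0 => by simp
  | (j + 1) => by
    rw [Finset.prod_range_succ, keyN n j]
    rcases le_or_gt j n with h | h
    · rw [Nat.descFactorial_succ]
      push_cast [Nat.cast_sub h]
      ring
    · have h1 : n.descFactorial j = 0 := Nat.descFactorial_eq_zero_iff_lt.2 h
      have h2 : n.descFactorial (j + 1) = 0 :=
        Nat.descFactorial_eq_zero_iff_lt.2 (by omega)
      rw [h1, h2]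
      simp

lemma bridge (n : ℕ) :
    (∏ i ∈ Finset.range n, (x0 + (n : T3) - (i : T3)))
      = ∏ i ∈ Finset.range n, ((⟨(i : ℚ) + 1/2, 1, 0⟩ : T3)) := by
  rw [← Finset.prod_range_reflect (fun i => ((⟨(i : ℚ) + 1/2, 1, 0⟩ : T3))) n]
  apply Finset.prod_congr rfl
  intro i hi
  have hi' : i < n := Finset.mem_range.mp hi
  have hcast : ((n - 1 - i : ℕ) : ℚ) = (n : ℚ) - 1 - i := by
    have h1 : ((n - 1 - i : ℕ) : ℚ) = ((n : ℕ) : ℚ) - ((1 + i : ℕ) : ℚ) := by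
      rw [← Nat.cast_sub (by omega : 1 + i ≤ n)]
      congr 1
      omega
    rw [h1]
    push_cast
    ring
  ext
  · simp only [T3.sub_a, T3.add_a, T3.natCast_a, hcast]
    show -1/2 + (n : ℚ) - i = ((n : ℚ) - 1 - i) + 1/2
    ring
  · simp [x0]
  · simp [x0]

/-- The central identity in `T3`, from Chu–Vandermonde. -/
lemma central (n : ℕ) :
    (⟨g n, 2 * g n * Sh n, 2 * g n * D n⟩ : T3)
      = ∑ j ∈ Finset.range (n + 1),
          ((n.choose j : ℕ) : T3) * ((n.descFactorial (n - j) : ℕ) : T3)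
            * (⟨e j, -2 * e j * Sh j, 2 * e j * D j⟩ : T3) := by
  have hcomm : Commute x0 ((n : ℕ) : T3) := Commute.all _ _
  have V := Ring.descPochhammer_smeval_add (R := T3) (r := x0) (s := ((n : ℕ) : T3)) n hcomm
  rw [Finset.Nat.sum_antidiagonal_eq_sum_range_succ_mk] at V
  simp only [dP_smeval] at V
  have hL : (∏ i ∈ Finset.range n, (x0 + ((n : ℕ) : T3) - (i : T3)))
      = ⟨g n, 2 * g n * Sh n, 2 * g n * D n⟩ := by
    rw [bridge, key2]
  rw [hL] at V
  rw [V]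
  apply Finset.sum_congr rfl
  intro j hj
  rw [key1, keyN]
  ring

theorem binom_transform_D (n : ℕ) :
    ∑ k ∈ Finset.range (n + 1),
        (n.choose k : ℚ) * (-1) ^ k * (((2 * k).choose k : ℚ) / 4 ^ k) * D k
      = ((2 * n).choose n : ℚ) / 4 ^ n * D n := by
  have H := congrArg T3.cHom (central n)
  rw [map_sum] at H
  have hLc : T3.cHom (⟨g n, 2 * g n * Sh n, 2 * g n * D n⟩ : T3) = 2 * g n * D n := rfl
  rw [hLc] at H
  have hterm : ∀ j ∈ Finset.range (n + 1),
      T3.cHom (((n.choose j : ℕ) : T3) * ((n.descFactorial (n - j) : ℕ) : T3)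
          * (⟨e j, -2 * e j * Sh j, 2 * e j * D j⟩ : T3))
        = ((n.choose j : ℚ) * (n.descFactorial (n - j) : ℚ)) * (2 * e j * D j) := by
    intro j hj
    show (((n.choose j : ℕ) : T3) * ((n.descFactorial (n - j) : ℕ) : T3)
          * (⟨e j, -2 * e j * Sh j, 2 * e j * D j⟩ : T3)).c = _
    simp only [T3.mul_c, T3.mul_a, T3.mul_b, T3.natCast_a, T3.natCast_b, T3.natCast_c]
    show (n.choose j : ℚ) * (n.descFactorial (n - j) : ℚ) * (2 * e j * D j) + _ + _ = _
    ring
  rw [Finset.sum_congr rfl hterm] at H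
  -- now H : 2 * g n * D n = ∑ j, (C(n,j) * descFac) * (2 * e j * D j)
  have hfac : (n.factorial : ℚ) ≠ 0 := by
    exact_mod_cast Nat.factorial_ne_zero n
  have hcoef : ∀ j ∈ Finset.range (n + 1),
      ((n.choose j : ℚ) * (n.descFactorial (n - j) : ℚ)) * (2 * e j * D j)
        = (2 * (n.factorial : ℚ))
            * ((n.choose j : ℚ) * (-1) ^ j * (((2 * j).choose j : ℚ) / 4 ^ j) * D j) := by
    intro j hj
    have hjn : j ≤ n := by
      have := Finset.mem_range.mp hj; omega
    have hd : (j.factorial : ℚ) * (n.descFactorial (n - j) : ℚ) = (n.factorial : ℚ) := by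
      have := Nat.factorial_mul_descFactorial (show n - j ≤ n by omega)
      rw [show n - (n - j) = j by omega] at this
      exact_mod_cast this
    rw [show (2 : ℚ) * (n.factorial : ℚ)
        = 2 * ((j.factorial : ℚ) * (n.descFactorial (n - j) : ℚ)) from by rw [hd]]
    unfold e
    ring
  rw [Finset.sum_congr rfl hcoef, ← Finset.mul_sum] at H
  have h2nf : (2 * (n.factorial : ℚ)) ≠ 0 := by
    simp [hfac]
  apply mul_left_cancel₀ h2nf
  rw [← H]
  unfold g
  have h4 : (4 : ℚ) ^ n ≠ 0 := by positivity
  field_simp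

end
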